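/- Let w ∈ 𝒮'(ℝⁿ) be a tempered distribution and φ a mollifier with φ̂(0) = 1. Suppose there exists N ∈ ℕ such that for all m ∈ ℕ the estimate ‖|ξ|^{2m} ŵ·φ̂(ε·)‖_{L^∞(ℝⁿ)} ≤ c_m ε^{-N} holds for all ε ∈ (0,1], where ŵ is a continuous function. Then for every m ∈ ℕ, ‖|ξ|^{2m} ŵ‖_{L^∞(ℝⁿ)} < ∞. -/
import Mathlib


open Set

/-- If `‖ξ‖^{2m} |ŵ(ξ) φ̂(εξ)| ≤ c_m ε^{-N}` uniformly for `ε ∈ (0,1]`, with `φ̂ ∈ 𝒮`,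
`φ̂(0) = 1` and `ŵ` continuous, then `‖ξ‖^{2m} |ŵ(ξ)|` is bounded for every `m`. -/
theorem stmt5 {n N : ℕ} (W : (Fin n → ℝ) → ℂ) (hW : Continuous W)
    (Φ : SchwartzMap (Fin n → ℝ) ℂ) (hΦ0 : Φ 0 = 1)
    (hbound : ∀ m : ℕ, ∃ c : ℝ, ∀ ε ∈ Set.Ioc (0 : ℝ) 1, ∀ ξ,
      ‖ξ‖ ^ (2 * m) * ‖W ξ * Φ (ε • ξ)‖ ≤ c * ε⁻¹ ^ N) :
    ∀ m : ℕ, ∃ C : ℝ, ∀ ξ, ‖ξ‖ ^ (2 * m) * ‖W ξ‖ ≤ C := by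
  intro m
  -- continuity of Φ at 0 : get δ with ‖Φ x - 1‖ < 1/2 for dist x 0 < δ
  obtain ⟨δ, hδ, hδΦ⟩ :=
    Metric.continuousAt_iff.mp (Φ.continuous.continuousAt (x := 0)) (1/2) (by norm_num)
  set r : ℝ := min (δ / 2) 1 with hrdef
  have hr0 : 0 < r := lt_min (by linarith) one_pos
  have hr1 : r ≤ 1 := min_le_right _ _
  have hΦhalf : ∀ x : Fin n → ℝ, ‖x‖ = r → (1 : ℝ) / 2 ≤ ‖Φ x‖ := by
    intro x hx
    have hd : dist x 0 < δ := by
      rw [dist_zero_right, hx]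
      have : r ≤ δ / 2 := min_le_left _ _
      linarith
    have h1 := hδΦ hd
    rw [hΦ0] at h1
    have h2 : ‖Φ x - 1‖ < 1 / 2 := by simpa [dist_eq_norm] using h1
    have h3 : ‖(1 : ℂ)‖ - ‖Φ x‖ ≤ ‖(1 : ℂ) - Φ x‖ := norm_sub_norm_le _ _
    rw [norm_sub_rev] at h3
    simp only [norm_one] at h3
    linarith
  -- bound on the unit ball
  obtain ⟨C₁, hC₁⟩ :=
    (isCompact_closedBall (0 : Fin n → ℝ) 1).exists_bound_of_continuousOn
      (f := fun ξ => ‖ξ‖ ^ (2 * m) * ‖W ξ‖)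
      (((continuous_norm.pow _).mul hW.norm).continuousOn)
  obtain ⟨c, hc⟩ := hbound (m + N)
  set c' : ℝ := max c 0 with hc'def
  have hc'0 : 0 ≤ c' := le_max_right _ _
  have hc' : ∀ ε ∈ Set.Ioc (0 : ℝ) 1, ∀ ξ,
      ‖ξ‖ ^ (2 * (m + N)) * ‖W ξ * Φ (ε • ξ)‖ ≤ c' * ε⁻¹ ^ N := by
    intro ε hε ξ
    refine (hc ε hε ξ).trans ?_
    have : (0:ℝ) ≤ ε⁻¹ ^ N := pow_nonneg (inv_nonneg.mpr hε.1.le) N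
    exact mul_le_mul_of_nonneg_right (le_max_left _ _) this
  refine ⟨max C₁ (2 * c' / r ^ N), fun ξ => ?_⟩
  by_cases hξ : ‖ξ‖ ≤ 1
  · have hmem : ξ ∈ Metric.closedBall (0 : Fin n → ℝ) 1 := by
      simpa [Metric.mem_closedBall, dist_zero_right] using hξ
    have h4 := hC₁ ξ hmem
    rw [Real.norm_eq_abs] at h4
    exact ((le_abs_self _).trans h4).trans (le_max_left _ _)
  · push_neg at hξ
    have hξ0 : 0 < ‖ξ‖ := lt_trans one_pos hξ
    set ε : ℝ := r / ‖ξ‖ with hεdef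
    have hε0 : 0 < ε := div_pos hr0 hξ0
    have hε1 : ε ≤ 1 := by
      rw [div_le_one hξ0]; linarith
    have hnorm : ‖ε • ξ‖ = r := by
      rw [norm_smul, Real.norm_eq_abs, abs_of_pos hε0, hεdef,
        div_mul_cancel₀ _ (ne_of_gt hξ0)]
    have hΦb : (1 : ℝ) / 2 ≤ ‖Φ (ε • ξ)‖ := hΦhalf _ hnorm
    have hkey := hc' ε ⟨hε0, hε1⟩ ξ
    rw [norm_mul] at hkey
    have hεinv : ε⁻¹ = ‖ξ‖ / r := by
      rw [hεdef, inv_div]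
    rw [hεinv, div_pow] at hkey
    -- abbreviations
    set A : ℝ := ‖ξ‖ ^ (2 * m) * ‖W ξ‖ with hAdef
    have hA0 : 0 ≤ A := by positivity
    have hsplit : ‖ξ‖ ^ (2 * (m + N)) = ‖ξ‖ ^ (2 * m) * ‖ξ‖ ^ (2 * N) := by
      rw [← pow_add]; ring_nf
    rw [hsplit] at hkey
    -- A * ‖ξ‖^(2N) * (1/2) ≤ c' * ‖ξ‖^N / r^N
    have h5 : A * ‖ξ‖ ^ (2 * N) * (1 / 2) ≤ c' * (‖ξ‖ ^ N / r ^ N) := by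
      calc A * ‖ξ‖ ^ (2 * N) * (1 / 2)
          ≤ A * ‖ξ‖ ^ (2 * N) * ‖Φ (ε • ξ)‖ := by
            apply mul_le_mul_of_nonneg_left hΦb (by positivity)
        _ = ‖ξ‖ ^ (2 * m) * ‖ξ‖ ^ (2 * N) * (‖W ξ‖ * ‖Φ (ε • ξ)‖) := by
            rw [hAdef]; ring
        _ ≤ c' * (‖ξ‖ ^ N / r ^ N) := hkey
    have hone : (1 : ℝ) ≤ ‖ξ‖ := hξ.le
    have hpowle : ‖ξ‖ ^ N ≤ ‖ξ‖ ^ (2 * N) := pow_le_pow_right₀ hone (by omega)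
    have h6 : A * ‖ξ‖ ^ N ≤ (2 * c' / r ^ N) * ‖ξ‖ ^ N := by
      calc A * ‖ξ‖ ^ N ≤ A * ‖ξ‖ ^ (2 * N) :=
            mul_le_mul_of_nonneg_left hpowle hA0
        _ ≤ 2 * (c' * (‖ξ‖ ^ N / r ^ N)) := by linarith
        _ = (2 * c' / r ^ N) * ‖ξ‖ ^ N := by ring
    have h8 : A ≤ 2 * c' / r ^ N := le_of_mul_le_mul_right h6 (by positivity)
    exact h8.trans (le_max_right _ _)
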